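/- arXiv:1306.6373 — 2 statements merged into one kernel-verified Lean document; each statement's English description precedes it below -/
import Mathlib

section
/- Let f_n be the recursive 5-majority function on n = 5^k variables with p = 1/2 (variables are indexed by the leaves of the complete rooted 5-ary tree of depth k; each internal node is assigned the majority value of its 5 children, and f_n is the value assigned to the root). Then for every fixed ε ∈ (0,1), lim_{k→∞} inf_{W ∈ W_1(f_n)} P(f_n(ω^ε)=1 | ω ≡ 1 on W) = 1. -/
open Finset Filter

namespace BooleanNoise

/-- The Boolean truth value of a proposition (classically). -/
noncomputable def bOf (P : Prop) : Bool := @decide P (Classical.propDecidable P)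

section Basic

variable {Λ : Type*} [Fintype Λ] [DecidableEq Λ]

/-- Bernoulli(`p`) weight of a single bit. -/
def bern (p : ℝ) : Bool → ℝ := fun b => if b then p else 1 - p

/-- Weight of a configuration under the product Bernoulli(`p`) measure. -/
def wt (p : ℝ) (ω : Λ → Bool) : ℝ := ∏ i, bern p (ω i)

/-- Probability of an event under the product Bernoulli(`p`) measure. -/
noncomputable def pr (p : ℝ) (A : Set (Λ → Bool)) : ℝ :=
  ∑ ω : Λ → Bool, A.indicator (wt p) ω

/-- Expectation of a real random variable under the product Bernoulli(`p`) measure. -/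
noncomputable def ev (p : ℝ) (X : (Λ → Bool) → ℝ) : ℝ :=
  ∑ ω : Λ → Bool, wt p ω * X ω

/-- Joint single-coordinate weight of `(ω i, (ω^ε) i)`: the coordinate is kept with
probability `1 - ε` and resampled as a fresh Bernoulli(`p`) bit with probability `ε`. -/
def cwt (p ε : ℝ) (x y : Bool) : ℝ :=
  bern p x * ((if y = x then 1 - ε else 0) + ε * bern p y)

/-- Joint weight of the pair `(ω, ω^ε)`. -/
def jwt (p ε : ℝ) (q : (Λ → Bool) × (Λ → Bool)) : ℝ :=
  ∏ i, cwt p ε (q.1 i) (q.2 i)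

/-- Probability of an event for the pair `(ω, ω^ε)`. -/
noncomputable def jpr (p ε : ℝ) (A : Set ((Λ → Bool) × (Λ → Bool))) : ℝ :=
  ∑ q : (Λ → Bool) × (Λ → Bool), A.indicator (jwt p ε) q

/-- Covariance of `f ω` and `f (ω^ε)`. -/
noncomputable def cov (p ε : ℝ) (f : (Λ → Bool) → Bool) : ℝ :=
  jpr p ε {q | f q.1 = true ∧ f q.2 = true}
    - jpr p ε {q | f q.1 = true} * jpr p ε {q | f q.2 = true}

/-- `P(f ω ≠ f (ω^ε))`. -/
noncomputable def disagree (p ε : ℝ) (f : (Λ → Bool) → Bool) : ℝ :=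
  jpr p ε {q | f q.1 ≠ f q.2}

/-- `f` is monotone increasing (with respect to the coordinatewise order `false < true`). -/
def MonotoneBool (f : (Λ → Bool) → Bool) : Prop :=
  ∀ ⦃ω ω' : Λ → Bool⦄, ω ≤ ω' → f ω ≤ f ω'

/-- `W` forces `f = 1`: any configuration that is all ones on `W` has `f`-value `true`. -/
def ForcesOne (f : (Λ → Bool) → Bool) (W : Finset Λ) : Prop :=
  ∀ ω : Λ → Bool, (∀ i ∈ W, ω i = true) → f ω = true

/-- `W` is a 1-witness for `f`: a minimal set forcing `f = 1`. -/
def IsOneWitness (f : (Λ → Bool) → Bool) (W : Finset Λ) : Prop :=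
  ForcesOne f W ∧ ∀ W' ⊆ W, ForcesOne f W' → W' = W

/-- `W` forces `f = 0`: any configuration that is all zeros on `W` has `f`-value `false`. -/
def ForcesZero (f : (Λ → Bool) → Bool) (W : Finset Λ) : Prop :=
  ∀ ω : Λ → Bool, (∀ i ∈ W, ω i = false) → f ω = false

/-- `W` is a 0-witness for `f`: a minimal set forcing `f = 0`. -/
def IsZeroWitness (f : (Λ → Bool) → Bool) (W : Finset Λ) : Prop :=
  ForcesZero f W ∧ ∀ W' ⊆ W, ForcesZero f W' → W' = W

/-- `P(f(ω^ε) = 1 ∣ ω ≡ 1 on W)`. -/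
noncomputable def prNoisyOneGivenOnes (p ε : ℝ) (f : (Λ → Bool) → Bool) (W : Finset Λ) : ℝ :=
  jpr p ε {q | f q.2 = true ∧ ∀ i ∈ W, q.1 i = true}
    / jpr p ε {q | ∀ i ∈ W, q.1 i = true}

/-- `P(f(ω^ε) = 0 ∣ ω ≡ 0 on W)`. -/
noncomputable def prNoisyZeroGivenZeros (p ε : ℝ) (f : (Λ → Bool) → Bool) (W : Finset Λ) : ℝ :=
  jpr p ε {q | f q.2 = false ∧ ∀ i ∈ W, q.1 i = false}
    / jpr p ε {q | ∀ i ∈ W, q.1 i = false}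

/-- `P(f(ω^ε) = 1 ∣ f(ω) = 1)`. -/
noncomputable def prNoisyOneGivenOne (p ε : ℝ) (f : (Λ → Bool) → Bool) : ℝ :=
  jpr p ε {q | f q.2 = true ∧ f q.1 = true} / jpr p ε {q | f q.1 = true}

/-- `max_{W ∈ W₁(f)} [P(f(ω^ε)=1 ∣ ω ≡ 1 on W) − P(f=1)]`. -/
noncomputable def oneSNSgap (p ε : ℝ) (f : (Λ → Bool) → Bool) : ℝ :=
  ⨆ W : {W : Finset Λ // IsOneWitness f W},
    (prNoisyOneGivenOnes p ε f W.1 - pr p {ω | f ω = true})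

/-- `max_{W ∈ W₀(f)} [P(f(ω^ε)=0 ∣ ω ≡ 0 on W) − P(f=0)]`. -/
noncomputable def zeroSNSgap (p ε : ℝ) (f : (Λ → Bool) → Bool) : ℝ :=
  ⨆ W : {W : Finset Λ // IsZeroWitness f W},
    (prNoisyZeroGivenZeros p ε f W.1 - pr p {ω | f ω = false})

end Basic

/-- A sequence of Boolean functions is non-degenerate if `P(fₙ = 1)` stays bounded
away from `0` and from `1`. -/
def Nondeg {Λ : ℕ → Type*} [∀ n, Fintype (Λ n)] [∀ n, DecidableEq (Λ n)]
    (p : ℕ → ℝ) (f : ∀ n, (Λ n → Bool) → Bool) : Prop :=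
  ∃ c : ℝ, 0 < c ∧ ∀ᶠ n : ℕ in atTop,
    c ≤ pr (p n) {ω | f n ω = true} ∧ pr (p n) {ω | f n ω = true} ≤ 1 - c

section Graphs

/-- The index set of the `n.choose 2` potential edges of a graph on `Fin n`. -/
abbrev EdgeIdx (n : ℕ) := {e : Fin n × Fin n // e.1 < e.2}

/-- The graph on `Fin n` determined by an edge configuration. -/
def graphOf {n : ℕ} (ω : EdgeIdx n → Bool) : SimpleGraph (Fin n) where
  Adj i j := ∃ e : EdgeIdx n, ω e = true ∧
    ((e.1.1 = i ∧ e.1.2 = j) ∨ (e.1.1 = j ∧ e.1.2 = i))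
  symm := by
    constructor
    rintro i j ⟨e, he, h⟩
    exact ⟨e, he, h.symm⟩
  loopless := by
    constructor
    rintro i ⟨e, he, (⟨h1, h2⟩ | ⟨h1, h2⟩)⟩ <;>
      · have := e.2
        rw [h1, h2] at this
        exact lt_irrefl i this

/-- `G` contains a cycle of length `ℓ`. -/
def hasCycleOfLength {V : Type*} (G : SimpleGraph V) (ℓ : ℕ) : Prop :=
  ∃ (v : V) (c : G.Walk v v), c.IsCycle ∧ c.length = ℓ

/-- The minimum degree of `G` is at least `k`. -/
def minDegreeAtLeast {V : Type*} (G : SimpleGraph V) (k : ℕ) : Prop :=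
  ∀ v : V, k ≤ (G.neighborSet v).ncard

/-- `G` contains a copy of `H`. -/
def containsCopy {V W : Type*} (G : SimpleGraph V) (H : SimpleGraph W) : Prop :=
  ∃ φ : H →g G, Function.Injective φ

/-- The number of copies of `H` in `G` (subgraphs of `G` isomorphic to `H`). -/
noncomputable def copyCount {V W : Type*} (G : SimpleGraph V) (H : SimpleGraph W) : ℕ :=
  Nat.card {G' : G.Subgraph // Nonempty (G'.coe ≃g H)}

/-- A graph is strictly balanced if every proper subgraph with at least one vertex has a
strictly smaller average degree, i.e. edge/vertex ratio. -/
def StrictlyBalanced {V : Type*} [Fintype V] (H : SimpleGraph V) : Prop :=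
  ∀ H' : H.Subgraph, H' ≠ ⊤ → H'.verts.Nonempty →
    (H'.edgeSet.ncard : ℝ) / (H'.verts.ncard : ℝ)
      < (H.edgeSet.ncard : ℝ) / (Fintype.card V : ℝ)

end Graphs

end BooleanNoise

namespace BooleanNoise

/-- Majority of 5 bits. -/
def maj5 (b : Fin 5 → Bool) : Bool :=
  decide (3 ≤ (Finset.univ.filter fun i => b i = true).card)

/-- The recursive 5-majority function on `5^k` variables (the leaves of the complete
rooted 5-ary tree of depth `k`): each internal node takes the majority value of its
5 children, and the output is the value at the root. -/
def recMaj5 : (k : ℕ) → (Fin (5 ^ k) → Bool) → Bool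
  | 0, ω => ω ⟨0, by norm_num⟩
  | k + 1, ω => maj5 fun j => recMaj5 k fun i =>
      ω ⟨j.val * 5 ^ k + i.val, by
        have hj : j.val + 1 ≤ 5 := j.isLt
        have hi : i.val < 5 ^ k := i.isLt
        calc j.val * 5 ^ k + i.val < j.val * 5 ^ k + 5 ^ k := by omega
          _ = (j.val + 1) * 5 ^ k := by ring
          _ ≤ 5 * 5 ^ k := Nat.mul_le_mul_right _ hj
          _ = 5 ^ (k + 1) := by ring⟩

section Aux

variable {Λ : Type*} [Fintype Λ] [DecidableEq Λ]

/-- probability of `f = true` under product measure with coordinate probabilities `ρ`. -/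
noncomputable def pro (ρ : Λ → ℝ) (f : (Λ → Bool) → Bool) : ℝ :=
  ∑ η : Λ → Bool, (∏ i, bern (ρ i) (η i)) * (if f η then 1 else 0)

lemma bern_nonneg {p : ℝ} (h0 : 0 ≤ p) (h1 : p ≤ 1) (b : Bool) : 0 ≤ bern p b := by
  cases b <;> simp [bern] <;> linarith

lemma bern_add (p : ℝ) : bern p true + bern p false = 1 := by simp [bern]

lemma bern_half (b : Bool) : bern (1/2) b = 1/2 := by cases b <;> norm_num [bern]

lemma sum_prod_bool (g : Λ → Bool → ℝ) :
    ∑ ω : Λ → Bool, ∏ i, g i (ω i) = ∏ i, (g i true + g i false) := by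
  classical
  have h1 : ∏ i, (g i true + g i false) = ∏ i, ∑ b, g i b := by
    simp [Fintype.sum_bool]
  rw [h1, Finset.prod_univ_sum (fun _ : Λ => (univ : Finset Bool)) (fun i b => g i b),
    Fintype.piFinset_univ]

lemma sum_wt_one (ρ : Λ → ℝ) : ∑ η : Λ → Bool, ∏ i, bern (ρ i) (η i) = 1 := by
  rw [sum_prod_bool]; simp [bern_add]

lemma pro_nonneg {ρ : Λ → ℝ} (h0 : ∀ i, 0 ≤ ρ i) (h1 : ∀ i, ρ i ≤ 1)
    (f : (Λ → Bool) → Bool) : 0 ≤ pro ρ f := by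
  apply Finset.sum_nonneg
  intro η _
  apply mul_nonneg (Finset.prod_nonneg fun i _ => bern_nonneg (h0 i) (h1 i) _)
  positivity

lemma pro_le_one {ρ : Λ → ℝ} (h0 : ∀ i, 0 ≤ ρ i) (h1 : ∀ i, ρ i ≤ 1)
    (f : (Λ → Bool) → Bool) : pro ρ f ≤ 1 := by
  rw [← sum_wt_one ρ]
  apply Finset.sum_le_sum
  intro η _
  have hw : 0 ≤ ∏ i, bern (ρ i) (η i) :=
    Finset.prod_nonneg fun i _ => bern_nonneg (h0 i) (h1 i) _
  rcases ite_eq_or_eq (f η = true) (1:ℝ) 0 with h | h <;> rw [h] <;> simp [hw]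


lemma sum_split_coord (a : Λ) (G : (Λ → Bool) → ℝ) :
    ∑ η : Λ → Bool, G η
      = ∑ η ∈ univ.filter (fun η : Λ → Bool => η a = true),
          (G η + G (Function.update η a false)) := by
  classical
  rw [← Finset.sum_filter_add_sum_filter_not univ (fun η : Λ → Bool => η a = true) G,
    Finset.sum_add_distrib]
  congr 1
  apply Finset.sum_nbij' (fun η => Function.update η a true)
      (fun η => Function.update η a false)
  · intro η _; simp
  · intro η _; simp
  · intro η hη
    simp only [mem_filter, mem_univ, true_and, Bool.not_eq_true] at hη
    funext i
    by_cases hi : i = a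
    · subst hi; simp [hη]
    · simp [Function.update_of_ne hi]
  · intro η hη
    simp only [mem_filter, mem_univ, true_and] at hη
    funext i
    by_cases hi : i = a
    · subst hi; simp [hη]
    · simp [Function.update_of_ne hi]
  · intro η hη
    simp only [mem_filter, mem_univ, true_and, Bool.not_eq_true] at hη
    congr 1
    funext i
    by_cases hi : i = a
    · subst hi; simp [hη]
    · simp [Function.update_of_ne hi]

lemma pro_eq_cond (ρ : Λ → ℝ) (f : (Λ → Bool) → Bool) (a : Λ) :
    pro ρ f = ∑ η ∈ univ.filter (fun η : Λ → Bool => η a = true),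
      (∏ i ∈ univ.erase a, bern (ρ i) (η i)) *
        (ρ a * (if f η then 1 else 0)
          + (1 - ρ a) * (if f (Function.update η a false) then 1 else 0)) := by
  classical
  rw [pro, sum_split_coord a]
  apply Finset.sum_congr rfl
  intro η hη
  simp only [mem_filter, mem_univ, true_and] at hη
  have hsplit : ∀ ξ : Λ → Bool, ∏ i, bern (ρ i) (ξ i)
      = bern (ρ a) (ξ a) * ∏ i ∈ univ.erase a, bern (ρ i) (ξ i) :=
    fun ξ => (Finset.mul_prod_erase univ _ (mem_univ a)).symm
  have h1 : (∏ i ∈ univ.erase a, bern (ρ i) (Function.update η a false i))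
      = ∏ i ∈ univ.erase a, bern (ρ i) (η i) := by
    apply Finset.prod_congr rfl
    intro i hi; rw [Function.update_of_ne (Finset.ne_of_mem_erase hi)]
  rw [hsplit η, hsplit (Function.update η a false), h1, hη, Function.update_self]
  simp only [bern, if_true, if_false, Bool.false_eq_true]
  ring

lemma pro_update_le (ρ : Λ → ℝ) (f : (Λ → Bool) → Bool)
    (hf : ∀ ⦃ω ω' : Λ → Bool⦄, ω ≤ ω' → f ω ≤ f ω')
    (h0 : ∀ i, 0 ≤ ρ i) (h1 : ∀ i, ρ i ≤ 1) (a : Λ) {x y : ℝ}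
    (hxy : x ≤ y) :
    pro (Function.update ρ a x) f ≤ pro (Function.update ρ a y) f := by
  classical
  rw [pro_eq_cond _ f a, pro_eq_cond _ f a]
  apply Finset.sum_le_sum
  intro η hη
  simp only [mem_filter, mem_univ, true_and] at hη
  have hpr : ∀ t : ℝ, (∏ i ∈ univ.erase a, bern (Function.update ρ a t i) (η i))
      = ∏ i ∈ univ.erase a, bern (ρ i) (η i) := by
    intro t
    apply Finset.prod_congr rfl
    intro i hi; rw [Function.update_of_ne (Finset.ne_of_mem_erase hi)]
  rw [hpr, hpr, Function.update_self, Function.update_self]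
  have hw : 0 ≤ ∏ i ∈ univ.erase a, bern (ρ i) (η i) :=
    Finset.prod_nonneg fun i _ => bern_nonneg (h0 i) (h1 i) _
  apply mul_le_mul_of_nonneg_left _ hw
  have hmono : Function.update η a false ≤ η := by
    intro i
    by_cases hi : i = a
    · subst hi; simp [hη]
    · simp [Function.update_of_ne hi, le_refl]
  have hff : (if f (Function.update η a false) then (1:ℝ) else 0) ≤ (if f η then 1 else 0) := by
    by_cases hc : f (Function.update η a false) = true
    · have h3 := hf hmono
      rw [hc] at h3
      have h2 : f η = true := by
        cases hfη : f η
        · rw [hfη] at h3; exact absurd h3 (by decide)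
        · rfl
      simp [hc, h2]
    · simp only [Bool.not_eq_true] at hc
      simp only [hc, if_false, Bool.false_eq_true]
      split_ifs <;> norm_num
  nlinarith [hff, hxy]

lemma pro_mono {ρ ρ' : Λ → ℝ} (f : (Λ → Bool) → Bool)
    (hf : ∀ ⦃ω ω' : Λ → Bool⦄, ω ≤ ω' → f ω ≤ f ω')
    (h0 : ∀ i, 0 ≤ ρ i) (hle : ∀ i, ρ i ≤ ρ' i) (h1 : ∀ i, ρ' i ≤ 1) :
    pro ρ f ≤ pro ρ' f := by
  classical
  have key : ∀ s : Finset Λ, pro ρ f ≤ pro (fun i => if i ∈ s then ρ' i else ρ i) f := by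
    intro s
    induction s using Finset.induction_on with
    | empty => simp
    | @insert a s ha ih =>
      refine le_trans ih ?_
      have e1 : (fun i => if i ∈ s then ρ' i else ρ i)
          = Function.update (fun i => if i ∈ insert a s then ρ' i else ρ i) a (ρ a) := by
        funext i
        by_cases hi : i = a
        · subst hi; simp [Function.update_self, ha]
        · simp [Function.update_of_ne hi, hi, Finset.mem_insert]
      have e2 : (fun i => if i ∈ insert a s then ρ' i else ρ i)
          = Function.update (fun i => if i ∈ insert a s then ρ' i else ρ i) a (ρ' a) := by
        funext i
        by_cases hi : i = a
        · subst hi; simp [Function.update_self]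
        · simp [Function.update_of_ne hi]
      rw [e1]
      nth_rewrite 2 [e2]
      apply pro_update_le _ f hf _ _ _ (hle a)
      · intro i
        by_cases hi : i ∈ insert a s <;> simp only [hi, if_true, if_false]
        · exact le_trans (h0 i) (hle i)
        · exact h0 i
      · intro i
        by_cases hi : i ∈ insert a s <;> simp only [hi, if_true, if_false]
        · exact h1 i
        · exact le_trans (hle i) (h1 i)
  have := key univ
  simpa using this


lemma pro_eq_sum_filter (ρ : Λ → ℝ) (f : (Λ → Bool) → Bool) :
    pro ρ f = ∑ η ∈ univ.filter (fun η => f η = true), ∏ i, bern (ρ i) (η i) := by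
  classical
  rw [pro, Finset.sum_filter]
  apply Finset.sum_congr rfl
  intro η _
  by_cases h : f η = true <;> simp [h]

/-- Reindex a `pro` along an equivalence of index sets. -/
lemma pro_reindex {α β : Type*} [Fintype α] [DecidableEq α] [Fintype β] [DecidableEq β]
    (e : α ≃ β) (ρ : β → ℝ) (f : (β → Bool) → Bool) :
    pro ρ f = pro (fun a => ρ (e a)) (fun η => f (fun b => η (e.symm b))) := by
  classical
  rw [pro, pro]
  apply Fintype.sum_equiv (e.symm.arrowCongr (Equiv.refl Bool))
  intro η
  have h1 : (fun b => (e.symm.arrowCongr (Equiv.refl Bool)) η (e.symm b)) = η := by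
    funext b; simp [Equiv.arrowCongr]
  have h2 : (∏ a, bern (ρ (e a)) ((e.symm.arrowCongr (Equiv.refl Bool)) η a))
      = ∏ b, bern (ρ b) (η b) := by
    apply Fintype.prod_equiv e
    intro a; simp [Equiv.arrowCongr]
  rw [h1, h2]

/-- Block decomposition: the law of the per-block values is a product measure. -/
lemma pro_block {J B : Type*} [Fintype J] [DecidableEq J] [Fintype B] [DecidableEq B]
    (ρ : J → B → ℝ) (F : (B → Bool) → Bool) (g : (J → Bool) → Bool) :
    pro (fun p : J × B => ρ p.1 p.2) (fun η => g (fun j => F (fun b => η (j, b))))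
      = pro (fun j => pro (ρ j) F) g := by
  classical
  -- first curry
  have step1 : pro (fun p : J × B => ρ p.1 p.2) (fun η => g (fun j => F (fun b => η (j, b))))
      = ∑ η : J → (B → Bool), (∏ j, ∏ b, bern (ρ j b) (η j b))
          * (if g (fun j => F (η j)) then 1 else 0) := by
    rw [pro]
    apply Fintype.sum_equiv (Equiv.curry J B Bool)
    intro η
    congr 1
    exact Fintype.prod_prod_type _
  rw [step1]
  -- per-block identification of the marginal weights
  have step2 : ∀ b : J → Bool,
      (∏ j, bern (pro (ρ j) F) (b j))
        = ∑ η ∈ univ.filter (fun η : J → (B → Bool) => (fun j => F (η j)) = b),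
            ∏ j, ∏ x, bern (ρ j x) (η j x) := by
    intro b
    have hb : ∀ j, bern (pro (ρ j) F) (b j)
        = ∑ ξ ∈ univ.filter (fun ξ : B → Bool => F ξ = b j), ∏ x, bern (ρ j x) (ξ x) := by
      intro j
      cases hbj : b j
      · have hfe : (univ.filter (fun ξ : B → Bool => F ξ = false))
            = univ.filter (fun ξ : B → Bool => ¬ (F ξ = true)) := by
          ext ξ; simp
        have hadd := Finset.sum_filter_add_sum_filter_not univ
          (fun ξ : B → Bool => F ξ = true) (fun ξ => ∏ x, bern (ρ j x) (ξ x))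
        rw [sum_wt_one (ρ j)] at hadd
        rw [hfe]
        have : bern (pro (ρ j) F) false = 1 - pro (ρ j) F := by simp [bern]
        rw [this, pro_eq_sum_filter]
        linarith
      · rw [← pro_eq_sum_filter]
        simp [bern]
    rw [Finset.prod_congr rfl (fun j _ => hb j),
      Finset.prod_univ_sum (fun j => univ.filter (fun ξ : B → Bool => F ξ = b j))
        (fun j ξ => ∏ x, bern (ρ j x) (ξ x))]
    apply Finset.sum_nbij' (fun η => η) (fun η => η)
    · intro η hη
      simp only [Fintype.mem_piFinset, mem_filter, mem_univ, true_and] at hη ⊢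
      funext j; exact hη j
    · intro η hη
      simp only [Fintype.mem_piFinset, mem_filter, mem_univ, true_and] at hη ⊢
      intro j; exact congrFun hη j
    · intro η _; rfl
    · intro η _; rfl
    · intro η _; rfl
  rw [pro]
  have step3 : ∀ b : J → Bool,
      (∏ j, bern (pro (ρ j) F) (b j)) * (if g b then 1 else 0)
        = ∑ η ∈ univ.filter (fun η : J → (B → Bool) => (fun j => F (η j)) = b),
            (∏ j, ∏ x, bern (ρ j x) (η j x)) * (if g (fun j => F (η j)) then 1 else 0) := by
    intro b
    rw [step2, Finset.sum_mul]
    apply Finset.sum_congr rfl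
    intro η hη
    simp only [mem_filter, mem_univ, true_and] at hη
    rw [hη]
  exact ((Finset.sum_congr rfl (fun b _ => step3 b)).trans
    (Finset.sum_fiberwise univ (fun η : J → (B → Bool) => fun j => F (η j))
      (fun η => (∏ j, ∏ x, bern (ρ j x) (η j x))
        * (if g (fun j => F (η j)) then 1 else 0)))).symm


lemma pro_zero (ρ : Fin 0 → ℝ) (f : (Fin 0 → Bool) → Bool) :
    pro ρ f = if f (fun i => i.elim0) then 1 else 0 := by
  rw [pro]
  rw [Fintype.sum_eq_single (fun i : Fin 0 => i.elim0) (fun η hη => by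
    exact absurd (funext fun i => i.elim0) hη)]
  simp

lemma pro_succ {n : ℕ} (ρ : Fin (n+1) → ℝ) (f : (Fin (n+1) → Bool) → Bool) :
    pro ρ f = ρ 0 * pro (fun i => ρ i.succ) (fun η => f (Fin.cons true η))
      + (1 - ρ 0) * pro (fun i => ρ i.succ) (fun η => f (Fin.cons false η)) := by
  classical
  have key : pro ρ f = ∑ p : Bool × (Fin n → Bool),
      (∏ i, bern (ρ i) ((Fin.cons p.1 p.2 : Fin (n+1) → Bool) i))
          * (if f (Fin.cons p.1 p.2 : Fin (n+1) → Bool) then 1 else 0) := by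
    rw [pro]
    apply Fintype.sum_equiv (Fin.consEquiv (fun _ => Bool)).symm
    intro η
    simp [Fin.consEquiv]
  rw [key, Fintype.sum_prod_type, Fintype.sum_bool]
  congr 1
  · rw [pro, Finset.mul_sum]
    apply Finset.sum_congr rfl
    intro η _
    rw [Fin.prod_univ_succ]
    simp only [Fin.cons_zero, Fin.cons_succ, bern]
    norm_num
  · rw [pro, Finset.mul_sum]
    apply Finset.sum_congr rfl
    intro η _
    rw [Fin.prod_univ_succ]
    simp only [Fin.cons_zero, Fin.cons_succ, bern, Bool.false_eq_true, if_false]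
    norm_num

set_option maxHeartbeats 1000000 in
lemma maj5_pro (q : ℝ) :
    pro (fun j : Fin 5 => if j.val < 3 then q else (1/2 : ℝ)) maj5
      = (3*q + 3*q^2 - 2*q^3)/4 := by
  have e5 : pro (fun j : Fin 5 => if j.val < 3 then q else (1/2 : ℝ)) maj5
      = pro (fun j : Fin (4+1) => if j.val < 3 then q else (1/2 : ℝ)) maj5 := rfl
  rw [e5]
  simp only [pro_succ, pro_zero]
  simp only [Fin.isValue, Fin.val_succ, Fin.val_zero]
  norm_num
  simp (config := { decide := true }) only []
  norm_num
  ring_nf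

lemma maj5_comp_perm (σ : Equiv.Perm (Fin 5)) (b : Fin 5 → Bool) :
    maj5 (fun i => b (σ i)) = maj5 b := by
  have hcard : (univ.filter fun i => b (σ i) = true).card
      = (univ.filter fun i => b i = true).card := by
    apply Finset.card_nbij' (fun i => σ i) (fun i => σ.symm i) <;> intro i hi <;> simp_all
  unfold maj5
  rw [hcard]

lemma pro_perm (σ : Equiv.Perm (Fin 5)) (ρ : Fin 5 → ℝ) :
    pro (fun j => ρ (σ j)) maj5 = pro ρ maj5 := by
  classical
  rw [pro, pro]
  apply Fintype.sum_equiv (Equiv.arrowCongr σ (Equiv.refl Bool))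
  intro η
  have h1 : (∏ i, bern (ρ (σ i)) (η i))
      = ∏ i, bern (ρ i) ((Equiv.arrowCongr σ (Equiv.refl Bool)) η i) := by
    apply Fintype.prod_equiv σ
    intro i
    simp [Equiv.arrowCongr]
  have h2 : maj5 ((Equiv.arrowCongr σ (Equiv.refl Bool)) η) = maj5 η := by
    have heq : ((Equiv.arrowCongr σ (Equiv.refl Bool)) η) = fun i => η (σ.symm i) := by
      funext i; simp [Equiv.arrowCongr]
    rw [heq, ← maj5_comp_perm σ (fun i => η (σ.symm i))]
    congr 1; funext i; simp
  rw [h1, h2]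

set_option maxRecDepth 100000 in
set_option maxHeartbeats 1000000 in
lemma exists_perm_of_card_three (S : Finset (Fin 5)) (h : S.card = 3) :
    ∃ σ : Equiv.Perm (Fin 5), ∀ j, ((σ j).val < 3 ↔ j ∈ S) := by
  revert h
  revert S
  decide

lemma maj5_pro_subset (S : Finset (Fin 5)) (h : S.card = 3) (q : ℝ) :
    pro (fun j : Fin 5 => if j ∈ S then q else (1/2 : ℝ)) maj5
      = (3*q + 3*q^2 - 2*q^3)/4 := by
  obtain ⟨σ, hσ⟩ := exists_perm_of_card_three S h
  have hfun : (fun j : Fin 5 => if j ∈ S then q else (1/2:ℝ))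
      = (fun j => if (σ j).val < 3 then q else 1/2) := by
    funext j
    by_cases hj : j ∈ S
    · rw [if_pos hj, if_pos ((hσ j).mpr hj)]
    · rw [if_neg hj, if_neg (fun hc => hj ((hσ j).mp hc))]
  rw [hfun]
  exact (pro_perm σ (fun j => if j.val < 3 then q else (1/2:ℝ))).trans (maj5_pro q)

/-- The block equivalence. -/
def blkE (k : ℕ) : Fin 5 × Fin (5^k) ≃ Fin (5^(k+1)) :=
  finProdFinEquiv.trans (finCongr (by ring))

lemma blkE_val (k : ℕ) (j : Fin 5) (i : Fin (5^k)) :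
    (blkE k (j, i)).val = j.val * 5^k + i.val := by
  simp [blkE, finProdFinEquiv]
  ring

lemma recMaj5_succ (k : ℕ) (ω : Fin (5^(k+1)) → Bool) :
    recMaj5 (k+1) ω = maj5 (fun j => recMaj5 k (fun i => ω (blkE k (j, i)))) := by
  show maj5 _ = maj5 _
  congr 1
  funext j
  congr 1
  funext i
  congr 1
  exact Fin.ext (blkE_val k j i).symm

lemma maj5_mono ⦃b b' : Fin 5 → Bool⦄ (h : b ≤ b') : maj5 b ≤ maj5 b' := by
  have hsub : (univ.filter fun i => b i = true) ⊆ (univ.filter fun i => b' i = true) := by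
    intro i hi
    simp only [mem_filter, mem_univ, true_and] at hi ⊢
    have := h i
    rw [hi] at this
    exact Bool.eq_true_of_true_le this
  have hcard := Finset.card_le_card hsub
  unfold maj5
  by_cases h3 : 3 ≤ (univ.filter fun i => b i = true).card
  · have h3' : 3 ≤ (univ.filter fun i => b' i = true).card := le_trans h3 hcard
    simp [h3, h3']
  · simp [h3]

lemma recMaj5_mono (k : ℕ) : ∀ ⦃ω ω' : Fin (5^k) → Bool⦄, ω ≤ ω' →
    recMaj5 k ω ≤ recMaj5 k ω' := by
  induction k with
  | zero => intro ω ω' h; exact h _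
  | succ k ih =>
    intro ω ω' h
    rw [recMaj5_succ, recMaj5_succ]
    apply maj5_mono
    intro j
    exact ih (fun i => h _)

lemma maj5_dual : ∀ b : Fin 5 → Bool, maj5 (fun i => !(b i)) = !(maj5 b) := by decide

lemma recMaj5_dual (k : ℕ) : ∀ ω : Fin (5^k) → Bool,
    recMaj5 k (fun i => !(ω i)) = !(recMaj5 k ω) := by
  induction k with
  | zero => intro ω; rfl
  | succ k ih =>
    intro ω
    rw [recMaj5_succ, recMaj5_succ, ← maj5_dual]
    congr 1
    funext j
    exact ih _

lemma pro_half_self_dual {f : (Λ → Bool) → Bool}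
    (hd : ∀ ω : Λ → Bool, f (fun i => !(ω i)) = !(f ω)) :
    pro (fun _ => (1/2 : ℝ)) f = 1/2 := by
  classical
  have hw : ∀ η : Λ → Bool, (∏ i, bern (1/2 : ℝ) (η i)) = ∏ _i : Λ, (1/2 : ℝ) :=
    fun η => Finset.prod_congr rfl (fun i _ => bern_half _)
  have h1 : pro (fun _ => (1/2 : ℝ)) f
      = ∑ η : Λ → Bool, (∏ i, bern (1/2 : ℝ) (η i)) * (if f (fun i => !(η i)) then 1 else 0) := by
    rw [pro]
    apply Fintype.sum_bijective (fun (ω : Λ → Bool) i => !(ω i))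
      (Function.Involutive.bijective (fun ω => by funext i; simp))
    intro η
    have hnn : (fun i => !(!(η i))) = η := by funext i; simp
    simp only [hw, hnn]
  have h2 : ∀ η : Λ → Bool, (if f (fun i => !(η i)) then (1:ℝ) else 0)
      = 1 - (if f η then 1 else 0) := by
    intro η
    rw [hd η]
    cases f η <;> simp
  rw [Finset.sum_congr rfl (fun η _ => by rw [h2 η])] at h1
  have h3 : ∑ η : Λ → Bool, (∏ i, bern (1/2 : ℝ) (η i)) * (1 - (if f η then 1 else 0))
      = 1 - pro (fun _ => (1/2 : ℝ)) f := by
    have expand : ∀ η : Λ → Bool, (∏ i, bern (1/2:ℝ) (η i)) * (1 - (if f η then 1 else 0))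
        = (∏ i, bern (1/2:ℝ) (η i)) - (∏ i, bern (1/2:ℝ) (η i)) * (if f η then 1 else 0) :=
      fun η => by ring
    rw [Finset.sum_congr rfl (fun η _ => expand η), Finset.sum_sub_distrib,
      sum_wt_one, pro]
  rw [h3] at h1
  linarith

lemma pro_recMaj5_succ (k : ℕ) (ρ : Fin (5^(k+1)) → ℝ) :
    pro ρ (recMaj5 (k+1))
      = pro (fun j => pro (fun i => ρ (blkE k (j, i))) (recMaj5 k)) maj5 := by
  rw [pro_reindex (blkE k) ρ (recMaj5 (k+1))]
  rw [← pro_block (fun j i => ρ (blkE k (j, i))) (recMaj5 k) maj5]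
  congr 1
  funext η
  rw [recMaj5_succ]
  congr 1
  funext j
  congr 1
  funext i
  congr 1
  exact Equiv.symm_apply_apply _ _

lemma forcesOne_iff {f : (Λ → Bool) → Bool} (hf : MonotoneBool f) (W : Finset Λ) :
    ForcesOne f W ↔ f (fun i => decide (i ∈ W)) = true := by
  constructor
  · intro h
    exact h _ (fun i hi => decide_eq_true hi)
  · intro h ω hω
    have hle : (fun i => decide (i ∈ W)) ≤ ω := by
      intro i
      by_cases hi : i ∈ W
      · rw [hω i hi]; exact Bool.le_true _
      · simp [hi]
    have := hf hle
    rw [h] at this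
    exact Bool.eq_true_of_true_le this

lemma exists_oneWitness (f : (Λ → Bool) → Bool) (h : f (fun _ => true) = true) :
    ∃ W, IsOneWitness f W := by
  classical
  have huniv : ForcesOne f Finset.univ := by
    intro ω hω
    have : ω = fun _ => true := funext fun i => hω i (mem_univ i)
    rw [this, h]
  obtain ⟨W, hWmem, hWmin⟩ := Finset.exists_min_image
    (univ.filter (fun W : Finset Λ => ForcesOne f W)) Finset.card
    ⟨Finset.univ, by simp [huniv]⟩
  simp only [mem_filter, mem_univ, true_and] at hWmem
  refine ⟨W, hWmem, fun W' hsub hforce => ?_⟩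
  have hcard : W.card ≤ W'.card := hWmin W' (by simp [hforce])
  exact Finset.eq_of_subset_of_card_le hsub hcard

lemma recMaj5_const_true (k : ℕ) : recMaj5 k (fun _ => true) = true := by
  induction k with
  | zero => rfl
  | succ k ih =>
    rw [recMaj5_succ]
    have : (fun j : Fin 5 => recMaj5 k fun _ => true) = fun _ => true := by
      funext j; exact ih
    rw [this]
    decide

lemma recMaj5_const_false (k : ℕ) : recMaj5 k (fun _ => false) = false := by
  induction k with
  | zero => rfl
  | succ k ih =>
    rw [recMaj5_succ]
    have : (fun j : Fin 5 => recMaj5 k fun _ => false) = fun _ => false := by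
      funext j; exact ih
    rw [this]
    decide

/-- The trace of `W` on the `j`-th block. -/
def Vmap (k : ℕ) (W : Finset (Fin (5^(k+1)))) (j : Fin 5) : Finset (Fin (5^k)) :=
  univ.filter (fun i => blkE k (j, i) ∈ W)

lemma mem_Vmap {k : ℕ} {W : Finset (Fin (5^(k+1)))} {j : Fin 5} {i : Fin (5^k)} :
    i ∈ Vmap k W j ↔ blkE k (j, i) ∈ W := by simp [Vmap]

lemma blkE_inj {k : ℕ} {j j' : Fin 5} {i i' : Fin (5^k)}
    (h : blkE k (j, i) = blkE k (j', i')) : j = j' ∧ i = i' := by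
  have := (blkE k).injective h
  exact ⟨congrArg Prod.fst this, congrArg Prod.snd this⟩

lemma Vmap_sdiff_ne {k : ℕ} (W : Finset (Fin (5^(k+1)))) (j₀ : Fin 5)
    (X : Finset (Fin (5^k))) {j : Fin 5} (hj : j ≠ j₀) :
    Vmap k (W \ X.image (fun i => blkE k (j₀, i))) j = Vmap k W j := by
  ext i
  simp only [Vmap, mem_filter, mem_univ, true_and, Finset.mem_sdiff, Finset.mem_image]
  constructor
  · intro ⟨h, _⟩; exact h
  · intro h
    refine ⟨h, fun ⟨x, _, hx⟩ => hj (blkE_inj hx.symm).1⟩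

lemma Vmap_sdiff_eq {k : ℕ} (W : Finset (Fin (5^(k+1)))) (j₀ : Fin 5)
    (X : Finset (Fin (5^k))) :
    Vmap k (W \ X.image (fun i => blkE k (j₀, i))) j₀ = Vmap k W j₀ \ X := by
  ext i
  simp only [Vmap, mem_filter, mem_univ, true_and, Finset.mem_sdiff, Finset.mem_image]
  constructor
  · intro ⟨h, hn⟩
    exact ⟨h, fun hX => hn ⟨i, hX, rfl⟩⟩
  · intro ⟨h, hn⟩
    refine ⟨h, fun ⟨x, hx, hbx⟩ => ?_⟩
    obtain ⟨-, hxi⟩ := blkE_inj hbx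
    exact hn (hxi ▸ hx)

lemma forces_of_blocks {k : ℕ} (W' : Finset (Fin (5^(k+1)))) (S₀ : Finset (Fin 5))
    (hcard : 3 ≤ S₀.card)
    (hblocks : ∀ j ∈ S₀, ForcesOne (recMaj5 k) (Vmap k W' j)) :
    ForcesOne (recMaj5 (k+1)) W' := by
  intro ω hω
  rw [recMaj5_succ]
  have hsub : S₀ ⊆ univ.filter (fun j => recMaj5 k (fun i => ω (blkE k (j, i))) = true) := by
    intro j hj
    simp only [mem_filter, mem_univ, true_and]
    exact hblocks j hj _ (fun i hi => hω _ (mem_Vmap.mp hi))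
  have h3 : 3 ≤ (univ.filter (fun j => recMaj5 k (fun i => ω (blkE k (j, i))) = true)).card :=
    le_trans hcard (Finset.card_le_card hsub)
  unfold maj5
  exact decide_eq_true h3

/-- The set of blocks whose trace forces the subtree function to one. -/
def Sset (k : ℕ) (W : Finset (Fin (5^(k+1)))) : Finset (Fin 5) :=
  univ.filter (fun j => recMaj5 k (fun i => decide (i ∈ Vmap k W j)) = true)

lemma mem_Sset {k : ℕ} {W : Finset (Fin (5^(k+1)))} {j : Fin 5} :
    j ∈ Sset k W ↔ ForcesOne (recMaj5 k) (Vmap k W j) := by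
  rw [Sset, mem_filter, forcesOne_iff (recMaj5_mono k)]
  simp

lemma blocks_of_forces {k : ℕ} {W : Finset (Fin (5^(k+1)))}
    (h : ForcesOne (recMaj5 (k+1)) W) :
    3 ≤ (Sset k W).card := by
  have h1 := h (fun m => decide (m ∈ W)) (fun i hi => decide_eq_true hi)
  rw [recMaj5_succ] at h1
  have heq : ∀ j : Fin 5, (fun i => decide (blkE k (j, i) ∈ W))
      = (fun i => decide (i ∈ Vmap k W j)) := by
    intro j; funext i
    by_cases hi : blkE k (j, i) ∈ W
    · simp [hi, mem_Vmap.mpr hi]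
    · have hni : i ∉ Vmap k W j := fun hc => hi (mem_Vmap.mp hc)
      simp [hi, hni]
  have hset : Sset k W
      = univ.filter (fun j => recMaj5 k (fun i => decide (blkE k (j, i) ∈ W)) = true) := by
    apply Finset.filter_congr
    intro j _
    rw [heq j]
  rw [hset]
  unfold maj5 at h1
  exact of_decide_eq_true h1

lemma witness_structure {k : ℕ} {W : Finset (Fin (5^(k+1)))}
    (hW : IsOneWitness (recMaj5 (k+1)) W) :
    (Sset k W).card = 3 ∧
      (∀ j ∈ Sset k W, IsOneWitness (recMaj5 k) (Vmap k W j)) ∧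
      (∀ j ∉ Sset k W, Vmap k W j = ∅) := by
  classical
  have hS3 := blocks_of_forces hW.1
  have main_remove : ∀ (j₀ : Fin 5) (X : Finset (Fin (5^k))), X ⊆ Vmap k W j₀ →
      (3 ≤ ((Sset k W).erase j₀).card ∨ ForcesOne (recMaj5 k) (Vmap k W j₀ \ X)) →
      X = ∅ := by
    intro j₀ X hXsub hcase
    set W' := W \ X.image (fun i => blkE k (j₀, i)) with hW'
    have hforce : ForcesOne (recMaj5 (k+1)) W' := by
      rcases hcase with hc | hc
      · apply forces_of_blocks W' ((Sset k W).erase j₀) hc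
        intro j hj
        rw [hW', Vmap_sdiff_ne W j₀ X (Finset.ne_of_mem_erase hj)]
        exact mem_Sset.mp (Finset.mem_of_mem_erase hj)
      · apply forces_of_blocks W' (Sset k W) hS3
        intro j hj
        by_cases hjj : j = j₀
        · subst hjj; rw [hW', Vmap_sdiff_eq]; exact hc
        · rw [hW', Vmap_sdiff_ne W j₀ X hjj]; exact mem_Sset.mp hj
    have hWW : W' = W := hW.2 W' Finset.sdiff_subset hforce
    have hdisj : Disjoint W (X.image (fun i => blkE k (j₀, i))) :=
      Finset.sdiff_eq_self_iff_disjoint.mp hWW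
    have hsub2 : X.image (fun i => blkE k (j₀, i)) ⊆ W := by
      intro m hm
      obtain ⟨x, hx, rfl⟩ := Finset.mem_image.mp hm
      exact mem_Vmap.mp (hXsub hx)
    have himg : X.image (fun i => blkE k (j₀, i)) = ∅ := by
      rw [Finset.eq_empty_iff_forall_notMem]
      intro m hm
      exact (Finset.disjoint_right.mp hdisj hm) (hsub2 hm)
    exact Finset.image_eq_empty.mp himg
  have hempty : ∀ j₀ ∉ Sset k W, Vmap k W j₀ = ∅ := by
    intro j₀ hj₀
    apply main_remove j₀ (Vmap k W j₀) (Finset.Subset.refl _)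
    left
    rw [Finset.erase_eq_of_notMem hj₀]
    exact hS3
  have hwit : ∀ j₀ ∈ Sset k W, IsOneWitness (recMaj5 k) (Vmap k W j₀) := by
    intro j₀ hj₀
    refine ⟨mem_Sset.mp hj₀, fun V' hsub hf => ?_⟩
    have hX := main_remove j₀ (Vmap k W j₀ \ V') Finset.sdiff_subset
      (Or.inr (by
        have heq : Vmap k W j₀ \ (Vmap k W j₀ \ V') = V' := by
          ext i
          simp only [Finset.mem_sdiff, not_and, not_not]
          constructor
          · intro ⟨h1, h2⟩; exact h2 h1
          · intro h; exact ⟨hsub h, fun _ => h⟩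
        rw [heq]
        exact hf))
    have hVsub : Vmap k W j₀ ⊆ V' := by
      intro i hi
      by_contra hni
      have : i ∈ Vmap k W j₀ \ V' := Finset.mem_sdiff.mpr ⟨hi, hni⟩
      rw [hX] at this
      exact absurd this (Finset.notMem_empty i)
    exact Finset.Subset.antisymm hsub hVsub
  have hcard : (Sset k W).card = 3 := by
    by_contra hne
    have h4 : 4 ≤ (Sset k W).card := by omega
    obtain ⟨j₀, hj₀⟩ := Finset.card_pos.mp (by omega : 0 < (Sset k W).card)
    have hX := main_remove j₀ (Vmap k W j₀) (Finset.Subset.refl _)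
      (Or.inl (by rw [Finset.card_erase_of_mem hj₀]; omega))
    have hforces := mem_Sset.mp hj₀
    rw [hX] at hforces
    have := hforces (fun _ => false) (by simp)
    rw [recMaj5_const_false k] at this
    exact absurd this (by decide)
  exact ⟨hcard, hwit, hempty⟩

lemma pro_coord (ρ : Λ → ℝ) (a : Λ) : pro ρ (fun ω => ω a) = ρ a := by
  classical
  have h1 : ∀ η : Λ → Bool, (∏ i, bern (ρ i) (η i)) * (if η a then (1:ℝ) else 0)
      = ∏ i, (bern (ρ i) (η i) * (if i = a then (if η i then 1 else 0) else 1)) := by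
    intro η
    rw [Finset.prod_mul_distrib]
    congr 1
    rw [Finset.prod_ite_eq' univ a (fun i => if η i then (1:ℝ) else 0)]
    simp
  rw [pro, Finset.sum_congr rfl (fun η _ => h1 η),
    sum_prod_bool (fun i b => bern (ρ i) b * (if i = a then (if b then (1:ℝ) else 0) else 1))]
  have h2 : ∀ i, (bern (ρ i) true * (if i = a then (1:ℝ) else 1)
      + bern (ρ i) false * (if i = a then 0 else 1))
      = if i = a then ρ i else 1 := by
    intro i
    by_cases hi : i = a <;> simp [hi, bern] <;> ring
  have h3 : (∏ i, (bern (ρ i) true * (if i = a then (if (true:Bool) then (1:ℝ) else 0) else 1)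
      + bern (ρ i) false * (if i = a then (if (false:Bool) then (1:ℝ) else 0) else 1)))
      = ∏ i, (if i = a then ρ i else 1) := by
    apply Finset.prod_congr rfl
    intro i _
    simpa using h2 i
  rw [h3, Finset.prod_ite_eq' univ a (fun i => ρ i)]
  simp

/-- The biased-towards-one product density given all-ones on `W`. -/
noncomputable def rhoW (ε : ℝ) (W : Finset Λ) : Λ → ℝ :=
  fun i => if i ∈ W then 1 - ε/2 else 1/2

lemma rhoW_nonneg {ε : ℝ} (hε : ε ∈ Set.Ioo (0:ℝ) 1) (W : Finset Λ) (i : Λ) :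
    0 ≤ rhoW ε W i := by
  obtain ⟨h0, h1⟩ := hε
  rw [rhoW]; split_ifs <;> linarith

lemma rhoW_le_one {ε : ℝ} (hε : ε ∈ Set.Ioo (0:ℝ) 1) (W : Finset Λ) (i : Λ) :
    rhoW ε W i ≤ 1 := by
  obtain ⟨h0, h1⟩ := hε
  rw [rhoW]; split_ifs <;> linarith

lemma rhoW_empty (ε : ℝ) : rhoW ε (∅ : Finset Λ) = fun _ => 1/2 := by
  funext i; simp [rhoW]

/-- The geometric contraction rate. -/
noncomputable def crate (ε : ℝ) : ℝ := 1 - (1 - ε/2) * (1 - ε) / 4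

lemma crate_nonneg {ε : ℝ} (hε : ε ∈ Set.Ioo (0:ℝ) 1) : 0 ≤ crate ε := by
  obtain ⟨h0, h1⟩ := hε
  rw [crate]; nlinarith

lemma crate_lt_one {ε : ℝ} (hε : ε ∈ Set.Ioo (0:ℝ) 1) : crate ε < 1 := by
  obtain ⟨h0, h1⟩ := hε
  rw [crate]; nlinarith

theorem pro_witness_lb {ε : ℝ} (hε : ε ∈ Set.Ioo (0:ℝ) 1) :
    ∀ (k : ℕ) (W : Finset (Fin (5^k))), IsOneWitness (recMaj5 k) W →
      1 - (ε/2) * (crate ε)^k ≤ pro (rhoW ε W) (recMaj5 k) := by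
  obtain ⟨hε0, hε1⟩ := hε
  intro k
  induction k with
  | zero =>
    intro W hW
    have h0W : (⟨0, by norm_num⟩ : Fin (5^0)) ∈ W := by
      have := hW.1 (fun i => decide (i ∈ W)) (fun i hi => decide_eq_true hi)
      exact of_decide_eq_true this
    have : pro (rhoW ε W) (recMaj5 0) = rhoW ε W ⟨0, by norm_num⟩ :=
      pro_coord (rhoW ε W) _
    rw [this, rhoW, if_pos h0W, pow_zero]
    linarith
  | succ k ih =>
    intro W hW
    obtain ⟨hcard, hwit, hempty⟩ := witness_structure hW
    rw [pro_recMaj5_succ]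
    -- identify block densities
    have hblock : ∀ j : Fin 5, (fun i => rhoW ε W (blkE k (j, i)))
        = rhoW ε (Vmap k W j) := by
      intro j; funext i
      rw [rhoW, rhoW]
      by_cases hi : blkE k (j, i) ∈ W
      · rw [if_pos hi, if_pos (mem_Vmap.mpr hi)]
      · rw [if_neg hi, if_neg (fun hc => hi (mem_Vmap.mp hc))]
    set d : ℝ := (ε/2) * (crate ε)^k with hd
    have hd0 : 0 ≤ d := by
      apply mul_nonneg (by linarith)
      exact pow_nonneg (crate_nonneg ⟨hε0, hε1⟩) k
    have hdle : d ≤ ε/2 := by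
      have hpow : (crate ε)^k ≤ 1 :=
        pow_le_one₀ (crate_nonneg ⟨hε0, hε1⟩) (le_of_lt (crate_lt_one ⟨hε0, hε1⟩))
      nlinarith
    -- compare with the lower density vector
    have hstep : pro (fun j : Fin 5 => if j ∈ Sset k W then 1 - d else 1/2) maj5
        ≤ pro (fun j => pro (fun i => rhoW ε W (blkE k (j, i))) (recMaj5 k)) maj5 := by
      apply pro_mono maj5 maj5_mono
      · intro j
        split_ifs <;> linarith
      · intro j
        rw [hblock j]
        by_cases hj : j ∈ Sset k W
        · rw [if_pos hj]
          exact ih (Vmap k W j) (hwit j hj)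
        · rw [if_neg hj, hempty j hj, rhoW_empty, pro_half_self_dual (recMaj5_dual k)]
      · intro j
        rw [hblock j]
        exact pro_le_one (rhoW_nonneg ⟨hε0, hε1⟩ _) (rhoW_le_one ⟨hε0, hε1⟩ _) _
    rw [maj5_pro_subset (Sset k W) hcard (1 - d)] at hstep
    refine le_trans ?_ hstep
    have hc : (1 - ε/2) * (1 - ε) ≤ (1 - d) * (1 - 2*d) := by
      apply mul_le_mul (by linarith) (by linarith) (by linarith) (by linarith)
    have key : 1 - d * crate ε ≤ (3*(1-d) + 3*(1-d)^2 - 2*(1-d)^3)/4 := by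
      rw [crate]
      nlinarith [mul_nonneg hd0 (sub_nonneg.mpr hc)]
    calc 1 - (ε/2) * (crate ε)^(k+1) = 1 - d * crate ε := by rw [hd, pow_succ]; ring
      _ ≤ _ := key

lemma cwt_true_sum (ε : ℝ) (y : Bool) :
    cwt (1/2) ε true y = (1/2) * bern (1 - ε/2) y := by
  cases y <;> norm_num [cwt, bern] <;> ring

lemma cwt_both_sum (ε : ℝ) (y : Bool) :
    cwt (1/2) ε true y + cwt (1/2) ε false y = 1 * bern (1/2) y := by
  cases y <;> norm_num [cwt, bern] <;> ring

/-- Inner sum over the original configuration, conditioned on all-ones on `W`. -/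
lemma inner_ones (ε : ℝ) (W : Finset Λ) (η : Λ → Bool) :
    ∑ ω : Λ → Bool, (if (∀ i ∈ W, ω i = true) then ∏ i, cwt (1/2) ε (ω i) (η i) else 0)
      = ∏ i, ((if i ∈ W then (1/2 : ℝ) else 1) * bern (rhoW ε W i) (η i)) := by
  classical
  have hre : ∀ ω : Λ → Bool, (if (∀ i ∈ W, ω i = true) then ∏ i, cwt (1/2) ε (ω i) (η i) else 0)
      = ∏ i, (if i ∈ W then (if ω i then cwt (1/2) ε true (η i) else 0)
          else cwt (1/2) ε (ω i) (η i)) := by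
    intro ω
    by_cases hω : ∀ i ∈ W, ω i = true
    · rw [if_pos hω]
      apply Finset.prod_congr rfl
      intro i _
      by_cases hi : i ∈ W
      · rw [if_pos hi, hω i hi, if_pos rfl]
      · rw [if_neg hi]
    · rw [if_neg hω]
      push_neg at hω
      obtain ⟨i₀, hi₀W, hi₀⟩ := hω
      rw [eq_comm]
      apply Finset.prod_eq_zero (mem_univ i₀)
      rw [if_pos hi₀W, if_neg hi₀]
  rw [Finset.sum_congr rfl (fun ω _ => hre ω),
    sum_prod_bool (fun i b => (if i ∈ W then (if b then cwt (1/2) ε true (η i) else 0)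
      else cwt (1/2) ε b (η i)))]
  apply Finset.prod_congr rfl
  intro i _
  by_cases hi : i ∈ W
  · simp only [hi, if_true, rhoW, eq_self_iff_true, Bool.false_eq_true, if_false, add_zero]
    exact cwt_true_sum ε (η i)
  · simp only [hi, if_false, rhoW]
    exact cwt_both_sum ε (η i)

lemma jpr_den (ε : ℝ) (W : Finset Λ) :
    jpr (1/2) ε {q : (Λ → Bool) × (Λ → Bool) | ∀ i ∈ W, q.1 i = true}
      = ∏ i, (if i ∈ W then (1/2 : ℝ) else 1) := by
  classical
  rw [jpr, Fintype.sum_prod_type]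
  have h1 : ∀ ω η : Λ → Bool,
      ({q : (Λ → Bool) × (Λ → Bool) | ∀ i ∈ W, q.1 i = true}).indicator (jwt (1/2) ε) (ω, η)
      = (if (∀ i ∈ W, ω i = true) then ∏ i, cwt (1/2) ε (ω i) (η i) else 0) := by
    intro ω η
    rw [Set.indicator_apply]
    congr 1
  rw [Finset.sum_congr rfl (fun ω _ => Finset.sum_congr rfl (fun η _ => h1 ω η)),
    Finset.sum_comm,
    Finset.sum_congr rfl (fun η _ => inner_ones ε W η)]
  have h2 : ∀ η : Λ → Bool, (∏ i, ((if i ∈ W then (1/2 : ℝ) else 1) * bern (rhoW ε W i) (η i)))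
      = (∏ i, (if i ∈ W then (1/2 : ℝ) else 1)) * ∏ i, bern (rhoW ε W i) (η i) :=
    fun η => Finset.prod_mul_distrib
  rw [Finset.sum_congr rfl (fun η _ => h2 η), ← Finset.mul_sum, sum_wt_one, mul_one]

lemma jpr_num (ε : ℝ) (f : (Λ → Bool) → Bool) (W : Finset Λ) :
    jpr (1/2) ε {q : (Λ → Bool) × (Λ → Bool) | f q.2 = true ∧ ∀ i ∈ W, q.1 i = true}
      = (∏ i, (if i ∈ W then (1/2 : ℝ) else 1)) * pro (rhoW ε W) f := by
  classical
  rw [jpr, Fintype.sum_prod_type]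
  have h1 : ∀ ω η : Λ → Bool,
      ({q : (Λ → Bool) × (Λ → Bool) | f q.2 = true ∧ ∀ i ∈ W, q.1 i = true}).indicator
          (jwt (1/2) ε) (ω, η)
      = (if f η then 1 else 0) * (if (∀ i ∈ W, ω i = true)
          then ∏ i, cwt (1/2) ε (ω i) (η i) else 0) := by
    intro ω η
    rw [Set.indicator_apply]
    by_cases hf : f η = true
    · by_cases hω : ∀ i ∈ W, ω i = true
      · rw [if_pos ⟨hf, hω⟩, if_pos hω, hf, if_pos rfl, one_mul]; rfl
      · rw [if_neg (fun hc => hω hc.2), if_neg hω, mul_zero]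
    · rw [if_neg (fun hc => hf hc.1), if_neg hf, zero_mul]
  rw [Finset.sum_congr rfl (fun ω _ => Finset.sum_congr rfl (fun η _ => h1 ω η)),
    Finset.sum_comm]
  have h2 : ∀ η : Λ → Bool,
      (∑ ω : Λ → Bool, (if f η then (1:ℝ) else 0) * (if (∀ i ∈ W, ω i = true)
          then ∏ i, cwt (1/2) ε (ω i) (η i) else 0))
      = (∏ i, (if i ∈ W then (1/2 : ℝ) else 1))
          * ((∏ i, bern (rhoW ε W i) (η i)) * (if f η then 1 else 0)) := by
    intro η
    rw [← Finset.mul_sum, inner_ones ε W η, Finset.prod_mul_distrib]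
    ring
  rw [Finset.sum_congr rfl (fun η _ => h2 η), ← Finset.mul_sum, pro]

lemma prNoisy_eq_pro {ε : ℝ} (hε : ε ∈ Set.Ioo (0:ℝ) 1) (f : (Λ → Bool) → Bool) (W : Finset Λ) :
    prNoisyOneGivenOnes (1/2) ε f W = pro (rhoW ε W) f := by
  rw [prNoisyOneGivenOnes, jpr_num ε f W, jpr_den ε W]
  have hne : (∏ i, (if i ∈ W then (1/2 : ℝ) else 1)) ≠ 0 := by
    apply Finset.prod_ne_zero_iff.mpr
    intro i _
    split_ifs <;> norm_num
  rw [mul_comm, mul_div_assoc, div_self hne, mul_one]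

end Aux

/-- For the recursive 5-majority function at `p = 1/2`, for every fixed
`ε ∈ (0,1)`, the conditional probability `P(f_n(ω^ε)=1 ∣ ω ≡ 1 on W)` tends to `1`
uniformly over all 1-witnesses `W`. -/
theorem stmt14 (ε : ℝ) (hε : ε ∈ Set.Ioo (0 : ℝ) 1) :
    Tendsto (fun k : ℕ =>
        ⨅ W : {W : Finset (Fin (5 ^ k)) // IsOneWitness (recMaj5 k) W},
          prNoisyOneGivenOnes (1/2) ε (recMaj5 k) W.1)
      atTop (nhds 1) := by
  obtain ⟨hε0, hε1⟩ := hε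
  have hr0 : 0 ≤ crate ε := crate_nonneg ⟨hε0, hε1⟩
  have hr1 : crate ε < 1 := crate_lt_one ⟨hε0, hε1⟩
  have hWex : ∀ k : ℕ, ∃ W, IsOneWitness (recMaj5 k) W :=
    fun k => exists_oneWitness _ (recMaj5_const_true k)
  have hlow : ∀ (k : ℕ) (W : Finset (Fin (5^k))), IsOneWitness (recMaj5 k) W →
      1 - (ε/2) * (crate ε)^k ≤ prNoisyOneGivenOnes (1/2) ε (recMaj5 k) W := by
    intro k W h
    rw [prNoisy_eq_pro ⟨hε0, hε1⟩]
    exact pro_witness_lb ⟨hε0, hε1⟩ k W h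
  have hup : ∀ (k : ℕ) (W : Finset (Fin (5^k))),
      prNoisyOneGivenOnes (1/2) ε (recMaj5 k) W ≤ 1 := by
    intro k W
    rw [prNoisy_eq_pro ⟨hε0, hε1⟩]
    exact pro_le_one (rhoW_nonneg ⟨hε0, hε1⟩ W) (rhoW_le_one ⟨hε0, hε1⟩ W) _
  have hnn : ∀ (k : ℕ) (W : Finset (Fin (5^k))),
      0 ≤ prNoisyOneGivenOnes (1/2) ε (recMaj5 k) W := by
    intro k W
    rw [prNoisy_eq_pro ⟨hε0, hε1⟩]
    exact pro_nonneg (rhoW_nonneg ⟨hε0, hε1⟩ W) (rhoW_le_one ⟨hε0, hε1⟩ W) _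
  apply tendsto_of_tendsto_of_tendsto_of_le_of_le
    (g := fun k : ℕ => 1 - (ε/2) * (crate ε)^k) (h := fun _ : ℕ => (1:ℝ))
  · have h1 := tendsto_pow_atTop_nhds_zero_of_lt_one hr0 hr1
    have h2 := h1.const_mul (ε/2)
    have h3 := Filter.Tendsto.const_sub 1 h2
    simpa using h3
  · exact tendsto_const_nhds
  · intro k
    haveI : Nonempty {W : Finset (Fin (5 ^ k)) // IsOneWitness (recMaj5 k) W} :=
      ⟨⟨(hWex k).choose, (hWex k).choose_spec⟩⟩
    exact le_ciInf (fun W => hlow k W.1 W.2)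
  · intro k
    obtain ⟨W0, hW0⟩ := hWex k
    have hbdd : BddBelow (Set.range fun W : {W : Finset (Fin (5 ^ k)) //
        IsOneWitness (recMaj5 k) W} => prNoisyOneGivenOnes (1/2) ε (recMaj5 k) W.1) := by
      refine ⟨0, ?_⟩
      rintro x ⟨W, rfl⟩
      exact hnn k W.1
    exact ciInf_le_of_le hbdd ⟨W0, hW0⟩ (hup k W0)


end BooleanNoise
end

section
/- Let (f_n) be a sequence of monotone increasing Boolean functions f_n : {0,1}^{Λ_n} → {0,1} with parameters p_n, and let Y_n(ω) = #{W ∈ W_0(f_n) : ω ≡ 0 on W} count the occurring 0-witnesses. If C := sup_n E[Y_n] < ∞, then for every ε ∈ (0,1), every n, and every 1-witness W ∈ W_1(f_n), one has P(f_n(ω^ε)=1 | ω ≡ 1 on W) ≥ 1 − C·ε. Consequently, if in addition (f_n) is non-degenerate, then (f_n) is not 1-strongly noise sensitive. -/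
open Finset Filter

namespace BooleanNoise

/-- The number of 0-witnesses of `f` occurring (entirely filled with zeros) in `ω`. -/
noncomputable def zeroWitnessCount {Λ : Type*} [Fintype Λ] [DecidableEq Λ]
    (f : (Λ → Bool) → Bool) (ω : Λ → Bool) : ℕ :=
  {W : Finset Λ | IsZeroWitness f W ∧ ∀ i ∈ W, ω i = false}.ncard

section Aux

set_option linter.unusedSectionVars false
set_option linter.unusedVariables false

variable {Λ : Type*} [Fintype Λ] [DecidableEq Λ] {p ε : ℝ}

lemma bOf_iff {P : Prop} : bOf P = true ↔ P := by
  simp [bOf]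

lemma bern_pos (hp : p ∈ Set.Ioo (0:ℝ) 1) (b : Bool) : 0 < bern p b := by
  cases b <;> simp [bern] <;> linarith [hp.1, hp.2]

lemma wt_nonneg (hp : p ∈ Set.Ioo (0:ℝ) 1) (ω : Λ → Bool) : 0 ≤ wt p ω :=
  Finset.prod_nonneg fun i _ => (bern_pos hp _).le

lemma cwt_pos (hp : p ∈ Set.Ioo (0:ℝ) 1) (hε : ε ∈ Set.Ioo (0:ℝ) 1) (x y : Bool) :
    0 < cwt p ε x y := by
  have h1 := bern_pos hp x
  have h2 := bern_pos hp y
  have h3 : (0:ℝ) ≤ (if y = x then 1 - ε else 0) := by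
    split
    · linarith [hε.2]
    · exact le_rfl
  exact mul_pos h1 (by nlinarith [hε.1])

lemma jwt_pos (hp : p ∈ Set.Ioo (0:ℝ) 1) (hε : ε ∈ Set.Ioo (0:ℝ) 1)
    (q : (Λ → Bool) × (Λ → Bool)) : 0 < jwt p ε q :=
  Finset.prod_pos fun i _ => cwt_pos hp hε _ _

lemma jpr_nonneg (hp : p ∈ Set.Ioo (0:ℝ) 1) (hε : ε ∈ Set.Ioo (0:ℝ) 1)
    (A : Set ((Λ → Bool) × (Λ → Bool))) : 0 ≤ jpr p ε A :=
  Finset.sum_nonneg fun q _ => Set.indicator_nonneg (fun q _ => (jwt_pos hp hε q).le) q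

lemma jpr_pi (P : Λ → Bool → Bool → Prop) [∀ i x y, Decidable (P i x y)] :
    jpr p ε {q : (Λ → Bool) × (Λ → Bool) | ∀ i, P i (q.1 i) (q.2 i)}
      = ∏ i, ∑ v : Bool × Bool, if P i v.1 v.2 then cwt p ε v.1 v.2 else 0 := by
  classical
  unfold jpr
  have h1 : ∀ q : (Λ → Bool) × (Λ → Bool),
      ({q : (Λ → Bool) × (Λ → Bool) | ∀ i, P i (q.1 i) (q.2 i)}).indicator (jwt p ε) q
        = ∏ i, (if P i (q.1 i) (q.2 i) then cwt p ε (q.1 i) (q.2 i) else 0) := by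
    intro q
    rw [Set.indicator_apply, Fintype.prod_ite_zero]
    simp only [Set.mem_setOf_eq, jwt]
  rw [Finset.sum_congr rfl (fun q _ => h1 q)]
  rw [← Finset.sum_prod_piFinset (Finset.univ : Finset (Bool × Bool))
    (fun i v => if P i v.1 v.2 then cwt p ε v.1 v.2 else 0)]
  rw [Fintype.piFinset_univ]
  exact (Fintype.sum_equiv (Equiv.arrowProdEquivProdArrow Λ (fun _ => Bool) (fun _ => Bool))
    (fun g => ∏ i, if P i (g i).1 (g i).2 then cwt p ε (g i).1 (g i).2 else 0)
    (fun q => ∏ i, if P i (q.1 i) (q.2 i) then cwt p ε (q.1 i) (q.2 i) else 0)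
    (fun g => rfl)).symm

lemma pr_pi (P : Λ → Bool → Prop) [∀ i x, Decidable (P i x)] :
    pr p {ω : Λ → Bool | ∀ i, P i (ω i)}
      = ∏ i, ∑ b : Bool, if P i b then bern p b else 0 := by
  classical
  unfold pr
  have h1 : ∀ ω : Λ → Bool,
      ({ω : Λ → Bool | ∀ i, P i (ω i)}).indicator (wt p) ω
        = ∏ i, (if P i (ω i) then bern p (ω i) else 0) := by
    intro ω
    rw [Set.indicator_apply, Fintype.prod_ite_zero]
    simp only [Set.mem_setOf_eq, wt]
  rw [Finset.sum_congr rfl (fun ω _ => h1 ω)]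
  rw [← Finset.sum_prod_piFinset (Finset.univ : Finset Bool)
    (fun i b => if P i b then bern p b else 0)]
  rw [Fintype.piFinset_univ]

lemma sum_jwt : ∑ q : (Λ → Bool) × (Λ → Bool), jwt p ε q = 1 := by
  classical
  have h0 : ({q : (Λ → Bool) × (Λ → Bool) | ∀ i : Λ, True} : Set _) = Set.univ := by
    ext q; simp
  have h := jpr_pi (p := p) (ε := ε) (fun (_ : Λ) (_ _ : Bool) => True)
  rw [h0] at h
  rw [jpr, Set.indicator_univ] at h
  rw [h]
  have hco : ∀ i : Λ, (∑ v : Bool × Bool, if True then cwt p ε v.1 v.2 else 0) = 1 := by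
    intro i
    simp only [if_true]
    rw [Fintype.sum_prod_type]
    simp [Fintype.sum_bool, cwt, bern]
    ring
  rw [Finset.prod_congr rfl (fun i _ => hco i), Finset.prod_const_one]

lemma jpr_le_one (hp : p ∈ Set.Ioo (0:ℝ) 1) (hε : ε ∈ Set.Ioo (0:ℝ) 1)
    (A : Set ((Λ → Bool) × (Λ → Bool))) : jpr p ε A ≤ 1 := by
  rw [← sum_jwt (Λ := Λ) (p := p) (ε := ε)]
  exact Finset.sum_le_sum fun q _ =>
    Set.indicator_le_self' (fun q _ => (jwt_pos hp hε q).le) q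

lemma jpr_D (W : Finset Λ) :
    jpr p ε {q : (Λ → Bool) × (Λ → Bool) | ∀ i ∈ W, q.1 i = true}
      = ∏ i, (if i ∈ W then p else 1) := by
  classical
  have h := jpr_pi (p := p) (ε := ε) (fun (i : Λ) (x y : Bool) => i ∈ W → x = true)
  rw [h]
  refine Finset.prod_congr rfl fun i _ => ?_
  by_cases hi : i ∈ W <;>
    · simp only [hi, if_true, if_false, forall_true_left, not_false_iff]
      rw [Fintype.sum_prod_type]
      simp [Fintype.sum_bool, cwt, bern]
      try ring

lemma jpr_E (W W' : Finset Λ) :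
    jpr p ε {q : (Λ → Bool) × (Λ → Bool) |
        (∀ i ∈ W, q.1 i = true) ∧ (∀ i ∈ W', q.2 i = false)}
      = ∏ i, (if i ∈ W then (if i ∈ W' then p * (ε * (1 - p)) else p)
          else (if i ∈ W' then 1 - p else 1)) := by
  classical
  have hset : {q : (Λ → Bool) × (Λ → Bool) |
        (∀ i ∈ W, q.1 i = true) ∧ (∀ i ∈ W', q.2 i = false)}
      = {q : (Λ → Bool) × (Λ → Bool) |
          ∀ i, (i ∈ W → q.1 i = true) ∧ (i ∈ W' → q.2 i = false)} := by
    ext q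
    simp [forall_and]
  rw [hset]
  have h := jpr_pi (p := p) (ε := ε)
    (fun (i : Λ) (x y : Bool) => (i ∈ W → x = true) ∧ (i ∈ W' → y = false))
  rw [h]
  refine Finset.prod_congr rfl fun i _ => ?_
  by_cases hi : i ∈ W <;> by_cases hi' : i ∈ W' <;>
    · simp only [hi, hi', if_true, if_false, forall_true_left, not_false_iff]
      rw [Fintype.sum_prod_type]
      simp [Fintype.sum_bool, cwt, bern]
      try ring

lemma pr_Z (W' : Finset Λ) :
    pr p {ω : Λ → Bool | ∀ i ∈ W', ω i = false}
      = ∏ i, (if i ∈ W' then 1 - p else 1) := by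
  classical
  have h := pr_pi (p := p) (fun (i : Λ) (x : Bool) => i ∈ W' → x = false)
  rw [h]
  refine Finset.prod_congr rfl fun i _ => ?_
  by_cases hi : i ∈ W' <;>
    · simp only [hi, if_true, if_false, forall_true_left, not_false_iff]
      simp [Fintype.sum_bool, bern]

end Aux

section Aux2

set_option linter.unusedSectionVars false
set_option linter.unusedVariables false

variable {Λ : Type*} [Fintype Λ] [DecidableEq Λ] {p ε : ℝ}

lemma exists_zeroWitness_subset (f : (Λ → Bool) → Bool) (Z : Finset Λ)
    (hZ : ForcesZero f Z) : ∃ W' ⊆ Z, IsZeroWitness f W' := by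
  classical
  obtain ⟨W', hmem, hmin⟩ := Finset.exists_min_image
    (Z.powerset.filter (fun V => bOf (ForcesZero f V) = true)) Finset.card
    ⟨Z, by simp [Finset.mem_filter, bOf_iff, hZ]⟩
  simp only [Finset.mem_filter, Finset.mem_powerset, bOf_iff] at hmem
  refine ⟨W', hmem.1, hmem.2, fun V hV hVf => ?_⟩
  have hc : W'.card ≤ V.card := by
    refine hmin V ?_
    simp only [Finset.mem_filter, Finset.mem_powerset, bOf_iff]
    exact ⟨hV.trans hmem.1, hVf⟩
  exact Finset.eq_of_subset_of_card_le hV hc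

lemma exists_oneWitness_subset (f : (Λ → Bool) → Bool) (Z : Finset Λ)
    (hZ : ForcesOne f Z) : ∃ W' ⊆ Z, IsOneWitness f W' := by
  classical
  obtain ⟨W', hmem, hmin⟩ := Finset.exists_min_image
    (Z.powerset.filter (fun V => bOf (ForcesOne f V) = true)) Finset.card
    ⟨Z, by simp [Finset.mem_filter, bOf_iff, hZ]⟩
  simp only [Finset.mem_filter, Finset.mem_powerset, bOf_iff] at hmem
  refine ⟨W', hmem.1, hmem.2, fun V hV hVf => ?_⟩
  have hc : W'.card ≤ V.card := by
    refine hmin V ?_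
    simp only [Finset.mem_filter, Finset.mem_powerset, bOf_iff]
    exact ⟨hV.trans hmem.1, hVf⟩
  exact Finset.eq_of_subset_of_card_le hV hc

lemma exists_zeroWitness_of_false {f : (Λ → Bool) → Bool} (hf : MonotoneBool f)
    {ω : Λ → Bool} (h : f ω = false) :
    ∃ W', IsZeroWitness f W' ∧ ∀ i ∈ W', ω i = false := by
  classical
  set Z : Finset Λ := Finset.univ.filter (fun i => ω i = false) with hZdef
  have hZ : ForcesZero f Z := by
    intro ω'' h''
    have hle : ω'' ≤ ω := by
      intro i
      cases hωi : ω i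
      · rw [h'' i (by simp [hZdef, hωi])]
      · exact Bool.le_true _
    have hle2 := hf hle
    rw [h] at hle2
    exact le_antisymm hle2 (Bool.false_le _)
  obtain ⟨W', hsub, hw⟩ := exists_zeroWitness_subset f Z hZ
  refine ⟨W', hw, fun i hi => ?_⟩
  have := hsub hi
  simp only [hZdef, Finset.mem_filter] at this
  exact this.2

lemma forcesOne_inter_forcesZero {f : (Λ → Bool) → Bool} {W W' : Finset Λ}
    (hW : ForcesOne f W) (hW' : ForcesZero f W') : ∃ i, i ∈ W ∧ i ∈ W' := by
  by_contra hcon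
  push_neg at hcon
  set ω : Λ → Bool := fun i => bOf (i ∈ W) with hωdef
  have h1 : f ω = true := hW ω (fun i hi => by simp [hωdef, bOf_iff, hi])
  have h0 : f ω = false := by
    refine hW' ω (fun i hi => ?_)
    have hnW : i ∉ W := fun hiW => hcon i hiW hi
    simp [hωdef, bOf, hnW]
  rw [h1] at h0
  exact Bool.noConfusion h0

/-- The finset of 0-witnesses. -/
noncomputable def zwS (f : (Λ → Bool) → Bool) : Finset (Finset Λ) :=
  Finset.univ.filter (fun W' => bOf (IsZeroWitness f W') = true)

lemma mem_zwS {f : (Λ → Bool) → Bool} {W' : Finset Λ} :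
    W' ∈ zwS f ↔ IsZeroWitness f W' := by
  simp [zwS, bOf_iff]

lemma count_eq (f : (Λ → Bool) → Bool) (ω : Λ → Bool) :
    (zeroWitnessCount f ω : ℝ)
      = ∑ W' ∈ zwS f, (if ∀ i ∈ W', ω i = false then (1:ℝ) else 0) := by
  classical
  have hset : {W : Finset Λ | IsZeroWitness f W ∧ ∀ i ∈ W, ω i = false}
      = ↑((zwS f).filter (fun W' => ∀ i ∈ W', ω i = false)) := by
    ext V
    simp only [Set.mem_setOf_eq, Finset.coe_filter, Finset.mem_filter, mem_zwS]
    try tauto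
  rw [zeroWitnessCount, hset, Set.ncard_coe_finset, Finset.card_filter]
  push_cast
  try rfl

lemma ev_count (f : (Λ → Bool) → Bool) :
    ev p (fun ω => (zeroWitnessCount f ω : ℝ))
      = ∑ W' ∈ zwS f, ∏ i, (if i ∈ W' then 1 - p else 1) := by
  classical
  rw [ev]
  rw [Finset.sum_congr rfl (fun ω _ => by rw [count_eq f ω, Finset.mul_sum])]
  rw [Finset.sum_comm]
  refine Finset.sum_congr rfl fun W' _ => ?_
  rw [← pr_Z (p := p) W', pr]
  refine Finset.sum_congr rfl fun ω _ => ?_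
  rw [Set.indicator_apply]
  by_cases hω : ∀ i ∈ W', ω i = false
  · simp [hω]
  · simp [hω]

end Aux2

section Aux3

set_option linter.unusedSectionVars false
set_option linter.unusedVariables false

variable {Λ : Type*} [Fintype Λ] [DecidableEq Λ] {p ε : ℝ}

lemma key_lower_bound (hp : p ∈ Set.Ioo (0:ℝ) 1) (hε : ε ∈ Set.Ioo (0:ℝ) 1)
    {f : (Λ → Bool) → Bool} (hf : MonotoneBool f)
    {W : Finset Λ} (hW : IsOneWitness f W) :
    1 - ev p (fun ω => (zeroWitnessCount f ω : ℝ)) * ε ≤ prNoisyOneGivenOnes p ε f W := by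
  classical
  have hD_pos : 0 < jpr p ε {q : (Λ → Bool) × (Λ → Bool) | ∀ i ∈ W, q.1 i = true} := by
    rw [jpr_D]
    refine Finset.prod_pos fun i _ => ?_
    split
    · exact hp.1
    · exact one_pos
  have hsplit : jpr p ε {q : (Λ → Bool) × (Λ → Bool) | ∀ i ∈ W, q.1 i = true}
      = jpr p ε {q : (Λ → Bool) × (Λ → Bool) | f q.2 = true ∧ ∀ i ∈ W, q.1 i = true}
        + jpr p ε {q : (Λ → Bool) × (Λ → Bool) | f q.2 = false ∧ ∀ i ∈ W, q.1 i = true} := by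
    rw [jpr, jpr, jpr, ← Finset.sum_add_distrib]
    refine Finset.sum_congr rfl fun q _ => ?_
    by_cases hq : ∀ i ∈ W, q.1 i = true
    · cases hfq : f q.2
      · simp [Set.indicator_apply, hq, hfq]
      · simp [Set.indicator_apply, hq, hfq]
    · simp [Set.indicator_apply, hq]
  have hnn : ∀ (A : Set ((Λ → Bool) × (Λ → Bool))) (q : (Λ → Bool) × (Λ → Bool)),
      0 ≤ A.indicator (jwt p ε) q :=
    fun A q => Set.indicator_nonneg (fun q _ => (jwt_pos hp hε q).le) q
  have hBad : jpr p ε {q : (Λ → Bool) × (Λ → Bool) | f q.2 = false ∧ ∀ i ∈ W, q.1 i = true}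
      ≤ ∑ W' ∈ zwS f, jpr p ε {q : (Λ → Bool) × (Λ → Bool) |
          (∀ i ∈ W, q.1 i = true) ∧ (∀ i ∈ W', q.2 i = false)} := by
    have hterm : ∀ q : (Λ → Bool) × (Λ → Bool),
        ({q : (Λ → Bool) × (Λ → Bool) | f q.2 = false ∧ ∀ i ∈ W, q.1 i = true}).indicator
            (jwt p ε) q
          ≤ ∑ W' ∈ zwS f,
              ({q : (Λ → Bool) × (Λ → Bool) |
                (∀ i ∈ W, q.1 i = true) ∧ (∀ i ∈ W', q.2 i = false)}).indicator (jwt p ε) q := by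
      intro q
      by_cases hq : q ∈ ({q : (Λ → Bool) × (Λ → Bool) |
          f q.2 = false ∧ ∀ i ∈ W, q.1 i = true} : Set _)
      · obtain ⟨W'', hw'', hz⟩ := exists_zeroWitness_of_false hf hq.1
        have hqmem : q ∈ ({q : (Λ → Bool) × (Λ → Bool) |
            (∀ i ∈ W, q.1 i = true) ∧ (∀ i ∈ W'', q.2 i = false)} : Set _) := ⟨hq.2, hz⟩
        calc ({q : (Λ → Bool) × (Λ → Bool) |
                f q.2 = false ∧ ∀ i ∈ W, q.1 i = true}).indicator (jwt p ε) q
            = jwt p ε q := Set.indicator_of_mem hq _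
          _ = ({q : (Λ → Bool) × (Λ → Bool) |
                (∀ i ∈ W, q.1 i = true) ∧ (∀ i ∈ W'', q.2 i = false)}).indicator (jwt p ε) q :=
              (Set.indicator_of_mem hqmem _).symm
          _ ≤ _ := Finset.single_le_sum
              (f := fun W' => ({q : (Λ → Bool) × (Λ → Bool) |
                (∀ i ∈ W, q.1 i = true) ∧ (∀ i ∈ W', q.2 i = false)}).indicator (jwt p ε) q)
              (fun V _ => hnn _ q) (mem_zwS.2 hw'')
      · rw [Set.indicator_of_notMem hq]
        exact Finset.sum_nonneg fun W' _ => hnn _ q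
    calc jpr p ε {q : (Λ → Bool) × (Λ → Bool) | f q.2 = false ∧ ∀ i ∈ W, q.1 i = true}
        ≤ ∑ q : (Λ → Bool) × (Λ → Bool), ∑ W' ∈ zwS f,
            ({q : (Λ → Bool) × (Λ → Bool) |
              (∀ i ∈ W, q.1 i = true) ∧ (∀ i ∈ W', q.2 i = false)}).indicator (jwt p ε) q :=
          Finset.sum_le_sum fun q _ => hterm q
      _ = _ := by rw [Finset.sum_comm]; rfl
  have hE : ∀ W' ∈ zwS f, jpr p ε {q : (Λ → Bool) × (Λ → Bool) |
        (∀ i ∈ W, q.1 i = true) ∧ (∀ i ∈ W', q.2 i = false)}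
      ≤ ε * ((∏ i, (if i ∈ W' then 1 - p else 1))
          * jpr p ε {q : (Λ → Bool) × (Λ → Bool) | ∀ i ∈ W, q.1 i = true}) := by
    intro W' hW'
    obtain ⟨i₀, hi₀W, hi₀W'⟩ := forcesOne_inter_forcesZero hW.1 (mem_zwS.1 hW').1
    have h1p : (0:ℝ) < 1 - p := by linarith [hp.2]
    have h1e : (0:ℝ) < 1 - ε := by linarith [hε.2]
    have hpe := mul_pos hp.1 hε.1
    have hp1p := mul_pos hp.1 h1p
    have hpe1p := mul_pos hpe h1p
    rw [jpr_E, jpr_D]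
    set t : Λ → ℝ := fun i => if i ∈ W then (if i ∈ W' then p * (ε * (1 - p)) else p)
        else (if i ∈ W' then 1 - p else 1) with htdef
    set u : Λ → ℝ := fun i => (if i ∈ W then p else 1) * (if i ∈ W' then 1 - p else 1) with hudef
    have hu_nonneg : ∀ i, 0 ≤ u i := by
      intro i
      simp only [hudef]
      split_ifs <;> nlinarith [hp.1, hp.2, h1p, hp1p]
    have ht_nonneg : ∀ i, 0 ≤ t i := by
      intro i
      simp only [htdef]
      split_ifs <;> nlinarith [hp.1, hp.2, hε.1, hε.2, h1p, h1e, hpe, hp1p, hpe1p]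
    have htu : ∀ i, t i ≤ u i := by
      intro i
      simp only [htdef, hudef]
      split_ifs <;> nlinarith [hp.1, hp.2, hε.1, hε.2, h1p, h1e, hpe, hp1p, hpe1p]
    have h0 : t i₀ = ε * u i₀ := by
      simp only [htdef, hudef, hi₀W, hi₀W', if_true]
      ring
    calc ∏ i, t i = t i₀ * ∏ i ∈ Finset.univ.erase i₀, t i :=
          (Finset.mul_prod_erase _ _ (Finset.mem_univ i₀)).symm
      _ ≤ (ε * u i₀) * ∏ i ∈ Finset.univ.erase i₀, u i := by
          rw [h0]
          refine mul_le_mul le_rfl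
            (Finset.prod_le_prod (fun i _ => ht_nonneg i) (fun i _ => htu i))
            (Finset.prod_nonneg fun i _ => ht_nonneg i)
            (mul_nonneg hε.1.le (hu_nonneg i₀))
      _ = ε * ∏ i, u i := by
          rw [mul_assoc, Finset.mul_prod_erase _ _ (Finset.mem_univ i₀)]
      _ = ε * ((∏ i, (if i ∈ W' then 1 - p else 1)) * ∏ i, (if i ∈ W then p else 1)) := by
          rw [hudef, Finset.prod_mul_distrib, mul_comm (∏ i, (if i ∈ W then p else 1))]
  have hBle : jpr p ε {q : (Λ → Bool) × (Λ → Bool) | f q.2 = false ∧ ∀ i ∈ W, q.1 i = true}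
      ≤ ε * ev p (fun ω => (zeroWitnessCount f ω : ℝ))
          * jpr p ε {q : (Λ → Bool) × (Λ → Bool) | ∀ i ∈ W, q.1 i = true} := by
    refine hBad.trans ?_
    refine (Finset.sum_le_sum hE).trans ?_
    rw [ev_count, mul_assoc, Finset.sum_mul, Finset.mul_sum]
  rw [prNoisyOneGivenOnes, le_div_iff₀ hD_pos]
  nlinarith [hsplit, hBle, hD_pos]

end Aux3

/-- If the expected number `E[Y_n]` of occurring 0-witnesses is uniformly
bounded by `C`, then for every `ε ∈ (0,1)`, every `n` and every 1-witness `W`,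
`P(f_n(ω^ε)=1 ∣ ω ≡ 1 on W) ≥ 1 − C·ε`; consequently, if `(f_n)` is also non-degenerate,
then it is not 1-strongly noise sensitive. -/
theorem stmt18 {Λ : ℕ → Type*} [∀ n, Fintype (Λ n)] [∀ n, DecidableEq (Λ n)]
    (p : ℕ → ℝ) (hp : ∀ n, p n ∈ Set.Ioo (0 : ℝ) 1)
    (f : ∀ n, (Λ n → Bool) → Bool) (hmono : ∀ n, MonotoneBool (f n))
    (C : ℝ)
    (hbdd : ∀ n, ev (p n) (fun ω => (zeroWitnessCount (f n) ω : ℝ)) ≤ C) :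
    (∀ ε : ℝ, ε ∈ Set.Ioo (0 : ℝ) 1 → ∀ n (W : Finset (Λ n)), IsOneWitness (f n) W →
      1 - C * ε ≤ prNoisyOneGivenOnes (p n) ε (f n) W) ∧
    (Nondeg p f →
      ¬ ∀ ε : ℝ, ε ∈ Set.Ioo (0 : ℝ) 1 →
        Tendsto (fun n => oneSNSgap (p n) ε (f n)) atTop (nhds 0)) := by
  classical
  have hpart1 : ∀ ε : ℝ, ε ∈ Set.Ioo (0 : ℝ) 1 → ∀ n (W : Finset (Λ n)),
      IsOneWitness (f n) W → 1 - C * ε ≤ prNoisyOneGivenOnes (p n) ε (f n) W := by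
    intro ε hε n W hW
    have h1 := key_lower_bound (hp n) hε (hmono n) hW
    have h2 : ev (p n) (fun ω => (zeroWitnessCount (f n) ω : ℝ)) * ε ≤ C * ε :=
      mul_le_mul_of_nonneg_right (hbdd n) hε.1.le
    linarith
  refine ⟨hpart1, ?_⟩
  intro hnd hSNS
  obtain ⟨c, hc, hev⟩ := hnd
  have hC0 : 0 ≤ C := by
    refine le_trans ?_ (hbdd 0)
    exact Finset.sum_nonneg fun ω _ => mul_nonneg (wt_nonneg (hp 0) ω) (Nat.cast_nonneg _)
  set ε := min (1/2 : ℝ) (c / (2*(C+1))) with hεdef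
  have hCpos : (0:ℝ) < C + 1 := by linarith
  have hε : ε ∈ Set.Ioo (0:ℝ) 1 := by
    constructor
    · exact lt_min (by norm_num) (div_pos hc (by linarith))
    · exact lt_of_le_of_lt (min_le_left _ _) (by norm_num)
  have hCε : C * ε ≤ c / 2 := by
    have h1 : C * ε ≤ C * (c / (2*(C+1))) :=
      mul_le_mul_of_nonneg_left (min_le_right _ _) hC0
    have h2 : C * (c / (2*(C+1))) ≤ c/2 := by
      rw [mul_div_assoc', div_le_div_iff₀ (by linarith) (by norm_num : (0:ℝ) < 2)]
      nlinarith
    linarith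
  have hge : ∀ᶠ n in atTop, c/2 ≤ oneSNSgap (p n) ε (f n) := by
    filter_upwards [hev] with n hn
    obtain ⟨hlow, hupp⟩ := hn
    have hex : ∃ ω, f n ω = true := by
      by_contra hne
      push_neg at hne
      have hempty : {ω | f n ω = true} = (∅ : Set (Λ n → Bool)) := by
        ext ω
        simp [hne ω]
      rw [hempty] at hlow
      simp [pr] at hlow
      linarith
    obtain ⟨ω₀, hω₀⟩ := hex
    have htop : f n (fun _ => true) = true := by
      have hle : ω₀ ≤ fun _ => true := fun i => Bool.le_true _
      have h := hmono n hle
      rw [hω₀] at h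
      exact le_antisymm (Bool.le_true _) h
    have hforce : ForcesOne (f n) Finset.univ := by
      intro ω hω
      have hωeq : ω = fun _ => true := funext fun i => hω i (Finset.mem_univ i)
      rw [hωeq, htop]
    obtain ⟨W, hWsub, hW⟩ := exists_oneWitness_subset (f n) Finset.univ hforce
    have hterm : c/2 ≤ prNoisyOneGivenOnes (p n) ε (f n) W - pr (p n) {ω | f n ω = true} := by
      have h := hpart1 ε hε n W hW
      linarith
    refine le_trans hterm ?_
    unfold oneSNSgap
    exact le_ciSup (f := fun W : {W : Finset (Λ n) // IsOneWitness (f n) W} =>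
        prNoisyOneGivenOnes (p n) ε (f n) W.1 - pr (p n) {ω | f n ω = true})
      (Finite.bddAbove_range _) ⟨W, hW⟩
  have hfin := ge_of_tendsto (hSNS ε hε) hge
  linarith

end BooleanNoise
end
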